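/- Let s ≥ 2 be an integer. The set S = { x ∈ ℝ : ∃ c : ℕ → ℕ, (∀ n, c n ≤ s − 1) ∧ x = ∑_{n=0}^∞ c n / s^{2(n+1)} } (that is, the set of numbers in [0,1] whose s-adic expansion has digit 0 at every odd position, equivalently the set of invariant points of the function f₊) has Hausdorff dimension equal to 1/2. (Paper's Lemma 9.) -/

import Mathlib

open scoped ENNReal NNReal
open Set Filter MeasureTheory
set_option maxHeartbeats 1000000


namespace Stmt6Aux

lemma one_div_lt_one {b : ℝ} (hb : 1 < b) : 1/b < 1 := by
  rw [div_lt_one (by linarith)]; linarith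

lemma summable_geom {b : ℝ} (hb : 1 < b) : Summable (fun i : ℕ => (1/b)^i) :=
  summable_geometric_of_lt_one (by positivity) (one_div_lt_one hb)

lemma term_le {b D : ℝ} (hb : 1 < b) {c : ℕ → ℕ} (hc : ∀ n, (c n : ℝ) ≤ D) (n : ℕ) :
    (c n : ℝ)/b^(n+1) ≤ D * (1/b)^(n+1) := by
  have hb0 : (0:ℝ) < b := by linarith
  rw [one_div, inv_pow, ← div_eq_mul_inv]
  gcongr
  exact hc n

lemma summable_val {b D : ℝ} (hb : 1 < b) {c : ℕ → ℕ} (hc : ∀ n, (c n : ℝ) ≤ D) :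
    Summable (fun n : ℕ => (c n : ℝ)/b^(n+1)) := by
  have hb0 : (0:ℝ) < b := by linarith
  refine Summable.of_nonneg_of_le (fun n => by positivity) (term_le hb hc)
    (((summable_nat_add_iff 1).2 (summable_geom hb)).mul_left D)

lemma tsum_tail_nonneg {b : ℝ} (hb : 1 < b) (c : ℕ → ℕ) (N : ℕ) :
    0 ≤ ∑' i : ℕ, (c (i+N) : ℝ)/b^(i+N+1) := by
  have hb0 : (0:ℝ) < b := by linarith
  exact tsum_nonneg (fun i => by positivity)

lemma summable_tail {b D : ℝ} (hb : 1 < b) {c : ℕ → ℕ} (hc : ∀ n, (c n : ℝ) ≤ D) (N : ℕ) :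
    Summable (fun i : ℕ => (c (i+N) : ℝ)/b^(i+N+1)) :=
  (summable_nat_add_iff (f := fun n : ℕ => (c n : ℝ)/b^(n+1)) N).2 (summable_val hb hc)

lemma tsum_tail_le {b D : ℝ} (hb : 1 < b) (hD : 0 ≤ D) {c : ℕ → ℕ}
    (hc : ∀ n, (c n : ℝ) ≤ D) (N : ℕ) :
    ∑' i : ℕ, (c (i+N) : ℝ)/b^(i+N+1) ≤ D/(b-1) * (1/b)^N := by
  have hb0 : (0:ℝ) < b := by linarith
  have h1 : ∑' i : ℕ, (c (i+N) : ℝ)/b^(i+N+1) ≤ ∑' i : ℕ, (D * (1/b)^(N+1)) * (1/b)^i := by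
    refine Summable.tsum_le_tsum (fun i => ?_) (summable_tail hb hc N) ((summable_geom hb).mul_left _)
    calc (c (i+N) : ℝ)/b^(i+N+1) ≤ D * (1/b)^(i+N+1) := term_le hb hc (i+N)
      _ = (D * (1/b)^(N+1)) * (1/b)^i := by ring
  rw [tsum_mul_left, tsum_geometric_of_lt_one (by positivity) (one_div_lt_one hb)] at h1
  refine h1.trans_eq ?_
  have hb1 : b - 1 ≠ 0 := by intro h; linarith
  have h2 : (1 - 1/b) = (b-1)/b := by field_simp
  rw [h2, pow_succ]
  field_simp

lemma val_split {b D : ℝ} (hb : 1 < b) {c : ℕ → ℕ} (hc : ∀ n, (c n : ℝ) ≤ D) (N : ℕ) :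
    ∑' n : ℕ, (c n : ℝ)/b^(n+1)
      = (∑ k ∈ Finset.range N, (c k : ℝ)/b^(k+1)) + ∑' i : ℕ, (c (i+N) : ℝ)/b^(i+N+1) :=
  (Summable.sum_add_tsum_nat_add N (summable_val hb hc)).symm


lemma diff_le {b D : ℝ} (hb : 1 < b) (hD : 0 ≤ D) {c d : ℕ → ℕ}
    (hc : ∀ n, (c n : ℝ) ≤ D) (hd : ∀ n, (d n : ℝ) ≤ D) {N : ℕ}
    (hag : ∀ k, k < N → c k = d k) :
    |(∑' n : ℕ, (c n : ℝ)/b^(n+1)) - ∑' n : ℕ, (d n : ℝ)/b^(n+1)| ≤ D/(b-1) * (1/b)^N := by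
  rw [val_split hb hc N, val_split hb hd N]
  have hfin : (∑ k ∈ Finset.range N, (c k : ℝ)/b^(k+1))
      = ∑ k ∈ Finset.range N, (d k : ℝ)/b^(k+1) :=
    Finset.sum_congr rfl (fun k hk => by rw [hag k (Finset.mem_range.1 hk)])
  rw [hfin, add_sub_add_left_eq_sub]
  have h1 := tsum_tail_nonneg hb c N
  have h2 := tsum_tail_nonneg hb d N
  have h3 := tsum_tail_le hb hD hc N
  have h4 := tsum_tail_le hb hD hd N
  rw [abs_le]
  constructor <;> linarith

lemma abs_nat_sub_ge {p q : ℕ} (h : p ≠ q) : (1:ℝ) ≤ |(p:ℝ) - (q:ℝ)| := by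
  have h0 : ((p:ℤ) - q) ≠ 0 := sub_ne_zero.2 (by exact_mod_cast h)
  have h' : (1:ℤ) ≤ |(p:ℤ) - (q:ℤ)| := Int.one_le_abs h0
  have : ((p:ℝ) - q) = (((p:ℤ) - q : ℤ) : ℝ) := by push_cast; ring
  rw [this, ← Int.cast_abs]
  exact_mod_cast h'

lemma sep_core {m Tc Td M : ℝ} (hmain : M ≤ |m|) (h1 : 0 ≤ Tc) (h2 : 0 ≤ Td)
    (h3 : Tc ≤ 1/3 * M) (h4 : Td ≤ 1/3 * M) : 1/3 * M ≤ |m + (Tc - Td)| := by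
  have htail : |Tc - Td| ≤ 2/3 * M := by
    rw [abs_le]; constructor <;> linarith
  have habs : |m| - |Tc - Td| ≤ |m + (Tc - Td)| := by
    have h5 := abs_sub_abs_le_abs_sub m (-(Tc - Td))
    rw [abs_neg, sub_neg_eq_add] at h5
    exact h5
  linarith

lemma sep {b D : ℝ} (hb : 1 < b) (hD : 0 ≤ D) (hgap : D/(b-1) ≤ 1/3) {c d : ℕ → ℕ}
    (hc : ∀ n, (c n : ℝ) ≤ D) (hd : ∀ n, (d n : ℝ) ≤ D) {N : ℕ}
    (hag : ∀ k, k < N → c k = d k) (hne : c N ≠ d N) :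
    (1/3) * (1/b)^(N+1)
      ≤ |(∑' n : ℕ, (c n : ℝ)/b^(n+1)) - ∑' n : ℕ, (d n : ℝ)/b^(n+1)| := by
  have hb0 : (0:ℝ) < b := by linarith
  rw [val_split hb hc (N+1), val_split hb hd (N+1)]
  have hfin0 : (∑ k ∈ Finset.range N, (c k : ℝ)/b^(k+1))
      = ∑ k ∈ Finset.range N, (d k : ℝ)/b^(k+1) :=
    Finset.sum_congr rfl (fun k hk => by rw [hag k (Finset.mem_range.1 hk)])
  have hfin : (∑ k ∈ Finset.range (N+1), (c k : ℝ)/b^(k+1))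
      - (∑ k ∈ Finset.range (N+1), (d k : ℝ)/b^(k+1))
      = ((c N : ℝ) - (d N : ℝ))/b^(N+1) := by
    rw [Finset.sum_range_succ, Finset.sum_range_succ, hfin0]; ring
  have hq : (1:ℝ)/b^(N+1) = (1/b)^(N+1) := (one_div_pow b (N+1)).symm
  have hmain : (1/b:ℝ)^(N+1) ≤ |((c N : ℝ) - (d N : ℝ))/b^(N+1)| := by
    rw [abs_div, abs_of_pos (by positivity : (0:ℝ) < b^(N+1)), ← hq]
    have hge := abs_nat_sub_ge hne
    have hbp : (0:ℝ) < b^(N+1) := by positivity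
    rw [div_le_div_iff₀ hbp hbp]
    nlinarith
  have hp : (0:ℝ) < (1/b)^(N+1) := by positivity
  have hDb := mul_le_mul_of_nonneg_right hgap hp.le
  have h3 := (tsum_tail_le hb hD hc (N+1)).trans hDb
  have h4 := (tsum_tail_le hb hD hd (N+1)).trans hDb
  rw [show (∑ k ∈ Finset.range (N+1), (c k : ℝ)/b^(k+1))
        + (∑' i : ℕ, (c (i+(N+1)) : ℝ)/b^(i+(N+1)+1))
        - ((∑ k ∈ Finset.range (N+1), (d k : ℝ)/b^(k+1))
        + ∑' i : ℕ, (d (i+(N+1)) : ℝ)/b^(i+(N+1)+1))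
      = ((∑ k ∈ Finset.range (N+1), (c k : ℝ)/b^(k+1))
        - ∑ k ∈ Finset.range (N+1), (d k : ℝ)/b^(k+1))
        + ((∑' i : ℕ, (c (i+(N+1)) : ℝ)/b^(i+(N+1)+1))
        - ∑' i : ℕ, (d (i+(N+1)) : ℝ)/b^(i+(N+1)+1)) from by ring, hfin]
  exact sep_core hmain (tsum_tail_nonneg hb c (N+1)) (tsum_tail_nonneg hb d (N+1)) h3 h4


lemma exists_expansion (m : ℕ) (hm : 2 ≤ m) {y : ℝ} (hy : y ∈ Set.Ico (0:ℝ) 1) :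
    ∃ c : ℕ → ℕ, (∀ n, c n ≤ m - 1) ∧ y = ∑' n : ℕ, (c n : ℝ)/(m:ℝ)^(n+1) := by
  obtain ⟨hy0, hy1⟩ := hy
  have hm0 : (0:ℝ) < m := by positivity
  have hm1 : (1:ℝ) < m := by exact_mod_cast hm.trans_lt' one_lt_two
  set F : ℕ → ℤ := fun n => ⌊y * (m:ℝ)^n⌋ with hF
  have hF0 : F 0 = 0 := by
    simp only [hF, pow_zero, mul_one]
    exact Int.floor_eq_zero_iff.2 ⟨hy0, hy1⟩
  have hlb : ∀ n, ((F n : ℝ)) ≤ y * (m:ℝ)^n := fun n => Int.floor_le _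
  have hub : ∀ n, y * (m:ℝ)^n < (F n : ℝ) + 1 := fun n => Int.lt_floor_add_one _
  have key : ∀ n, (m:ℤ) * F n ≤ F (n+1) ∧ F (n+1) ≤ (m:ℤ) * F n + ((m:ℤ) - 1) := by
    intro n
    have hp : (0:ℝ) < (m:ℝ)^n := by positivity
    constructor
    · apply Int.le_floor.2
      push_cast
      calc ((m:ℝ)) * (F n : ℝ) ≤ (m:ℝ) * (y * (m:ℝ)^n) := by
            have := hlb n; nlinarith
        _ = y * (m:ℝ)^(n+1) := by ring
    · have : F (n+1) < (m:ℤ) * F n + (m:ℤ) := by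
        apply Int.floor_lt.2
        push_cast
        calc y * (m:ℝ)^(n+1) = (m:ℝ) * (y * (m:ℝ)^n) := by ring
          _ < (m:ℝ) * ((F n : ℝ) + 1) := by have := hub n; nlinarith
          _ = (m:ℝ) * (F n : ℝ) + m := by ring
      omega
  set c : ℕ → ℕ := fun n => (F (n+1) - (m:ℤ) * F n).toNat with hc
  have hcb : ∀ n, c n ≤ m - 1 := by
    intro n
    have := key n
    simp only [hc]
    omega
  have hcast : ∀ n, (c n : ℝ) = (F (n+1) : ℝ) - (m:ℝ) * (F n : ℝ) := by
    intro n
    have hk := (key n).1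
    have h0 : (0:ℤ) ≤ F (n+1) - (m:ℤ) * F n := by omega
    have hz : ((c n : ℤ)) = F (n+1) - (m:ℤ) * F n := by
      simp only [hc]; exact Int.toNat_of_nonneg h0
    calc (c n : ℝ) = (((c n : ℤ)) : ℝ) := by push_cast; ring
      _ = _ := by rw [hz]; push_cast; ring
  have hpart : ∀ n, (∑ k ∈ Finset.range n, (c k : ℝ)/(m:ℝ)^(k+1)) = (F n : ℝ)/(m:ℝ)^n := by
    intro n
    induction n with
    | zero => simp [hF0]
    | succ n ih =>
      rw [Finset.sum_range_succ, ih, hcast n]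
      have h1 : ((m:ℝ))^n ≠ 0 := by positivity
      have h2 : ((m:ℝ))^(n+1) ≠ 0 := by positivity
      field_simp
      ring
  have hDm : ∀ n, (c n : ℝ) ≤ (m:ℝ) - 1 := by
    intro n
    have h := hcb n
    have : (c n : ℝ) ≤ ((m - 1 : ℕ) : ℝ) := by exact_mod_cast h
    refine this.trans ?_
    rw [Nat.cast_sub (by omega)]
    norm_num
  have hsum : Summable (fun n : ℕ => (c n : ℝ)/(m:ℝ)^(n+1)) := summable_val hm1 hDm
  have hT1 : Tendsto (fun n => ∑ k ∈ Finset.range n, (c k : ℝ)/(m:ℝ)^(k+1)) atTop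
      (nhds (∑' n : ℕ, (c n : ℝ)/(m:ℝ)^(n+1))) := hsum.hasSum.tendsto_sum_nat
  have hT2 : Tendsto (fun n => ∑ k ∈ Finset.range n, (c k : ℝ)/(m:ℝ)^(k+1)) atTop (nhds y) := by
    have hbnd : ∀ n, |(∑ k ∈ Finset.range n, (c k : ℝ)/(m:ℝ)^(k+1)) - y| ≤ (1/(m:ℝ))^n := by
      intro n
      rw [hpart n]
      have hp : (0:ℝ) < (m:ℝ)^n := by positivity
      rw [abs_le]
      constructor
      · have := hub n
        rw [div_sub' hp.ne', neg_le, ← neg_div, one_div, inv_pow, ← one_div,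
          div_le_div_iff₀ hp hp]
        nlinarith
      · have := hlb n
        rw [div_sub' hp.ne', one_div, inv_pow, ← one_div, div_le_div_iff₀ hp hp]
        nlinarith
    have h0 : Tendsto (fun n : ℕ => (1/(m:ℝ))^n) atTop (nhds 0) :=
      tendsto_pow_atTop_nhds_zero_of_lt_one (by positivity) (one_div_lt_one hm1)
    have : Tendsto (fun n => (∑ k ∈ Finset.range n, (c k : ℝ)/(m:ℝ)^(k+1)) - y) atTop (nhds 0) := by
      refine squeeze_zero_norm (fun n => ?_) h0
      simpa using hbnd n
    have := this.add_const y
    simpa using this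
  exact ⟨c, hcb, tendsto_nhds_unique hT2 hT1⟩


lemma series_rw (s : ℕ) (c : ℕ → ℕ) :
    (∑' n : ℕ, (c n : ℝ)/(s:ℝ)^(2*(n+1))) = ∑' n : ℕ, (c n : ℝ)/((s:ℝ)^2)^(n+1) :=
  tsum_congr fun n => by rw [pow_mul]

lemma digit_cast {s : ℕ} (hs : 2 ≤ s) {c : ℕ → ℕ} (hc : ∀ n, c n ≤ s - 1) :
    ∀ n, (c n : ℝ) ≤ (s:ℝ) - 1 := by
  intro n
  have h := hc n
  have h2 : (c n : ℝ) ≤ ((s-1:ℕ):ℝ) := by exact_mod_cast h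
  rwa [Nat.cast_sub (by omega), Nat.cast_one] at h2

lemma upper (s : ℕ) (hs : 2 ≤ s) :
    dimH {x : ℝ | ∃ c : ℕ → ℕ, (∀ n, c n ≤ s - 1) ∧
      x = ∑' n : ℕ, (c n : ℝ) / (s : ℝ) ^ (2 * (n + 1))} ≤ 1 / 2 := by
  have hs1 : (1:ℝ) < s := by exact_mod_cast hs.trans_lt' one_lt_two
  have hs0 : (0:ℝ) < s := by linarith
  have hB : (1:ℝ) < (s:ℝ)^2 := by nlinarith
  have hD : (0:ℝ) ≤ (s:ℝ) - 1 := by linarith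
  have hs2 : (2:ℝ) ≤ (s:ℝ) := by exact_mod_cast hs
  have hgap : ((s:ℝ)-1)/((s:ℝ)^2-1) ≤ 1/3 := by
    rw [div_le_div_iff₀ (by nlinarith) (by norm_num)]
    nlinarith [mul_nonneg (by linarith : (0:ℝ) ≤ (s:ℝ)-1) (by linarith : (0:ℝ) ≤ (s:ℝ)-2)]
  set S := {x : ℝ | ∃ c : ℕ → ℕ, (∀ n, c n ≤ s - 1) ∧
      x = ∑' n : ℕ, (c n : ℝ) / (s : ℝ) ^ (2 * (n + 1))} with hSdef
  set a : ∀ n : ℕ, (Fin n → Fin s) → ℝ :=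
    fun n v => ∑ k : Fin n, ((v k : ℕ) : ℝ)/((s:ℝ)^2)^((k:ℕ)+1) with ha
  set t : ∀ n : ℕ, (Fin n → Fin s) → Set ℝ :=
    fun n v => Set.Icc (a n v) (a n v + (1/(s:ℝ)^2)^n) with htdef
  have hL : ∀ n : ℕ, (0:ℝ) ≤ (1/(s:ℝ)^2)^n := fun n => by positivity
  have hdiam : ∀ n v, EMetric.diam (t n v) = ENNReal.ofReal ((1/(s:ℝ)^2)^n) := by
    intro n v
    rw [htdef]
    simp only
    rw [EMetric.diam, Real.ediam_Icc, add_sub_cancel_left]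
  have hcov : ∀ n : ℕ, S ⊆ ⋃ v : Fin n → Fin s, t n v := by
    intro n x hx
    obtain ⟨c, hc1, hc2⟩ := hx
    have hcB : ∀ k, (c k : ℝ) ≤ (s:ℝ) - 1 := digit_cast hs hc1
    have hxval : x = ∑' k : ℕ, (c k : ℝ)/((s:ℝ)^2)^(k+1) := by rw [hc2, series_rw]
    set v : Fin n → Fin s := fun k => ⟨c k, by have := hc1 k; omega⟩ with hv
    refine Set.mem_iUnion.2 ⟨v, ?_⟩
    have hav : a n v = ∑ k ∈ Finset.range n, (c k : ℝ)/((s:ℝ)^2)^(k+1) := by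
      rw [ha]
      exact Fin.sum_univ_eq_sum_range (fun k => (c k : ℝ)/((s:ℝ)^2)^(k+1)) n
    have hsplit := val_split hB hcB n
    have htail0 := tsum_tail_nonneg hB c n
    have htail1 := tsum_tail_le hB hD hcB n
    have hq : (0:ℝ) < (1/(s:ℝ)^2)^n := by positivity
    have htail2 : (∑' i : ℕ, (c (i+n) : ℝ)/((s:ℝ)^2)^(i+n+1)) ≤ (1/(s:ℝ)^2)^n := by
      refine htail1.trans ?_
      have := mul_le_mul_of_nonneg_right (hgap.trans (by norm_num : (1:ℝ)/3 ≤ 1)) hq.le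
      linarith
    rw [htdef]
    simp only [Set.mem_Icc]
    rw [hav]
    constructor
    · rw [hxval, hsplit]; linarith
    · rw [hxval, hsplit]; linarith
  have hsum1 : ∀ n : ℕ, (∑ v : Fin n → Fin s, EMetric.diam (t n v) ^ ((1:ℝ)/2)) = 1 := by
    intro n
    have hone : ENNReal.ofReal ((1/(s:ℝ)^2)^n)
        = (((s:ℕ) : ℝ≥0∞)⁻¹)^(2*n) := by
      have h1 : ((1:ℝ)/(s:ℝ)^2)^n = (1/(s:ℝ))^(2*n) := by
        rw [show ((1:ℝ)/(s:ℝ)^2) = ((1:ℝ)/(s:ℝ))^2 by rw [div_pow, one_pow], ← pow_mul]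
      rw [h1, ENNReal.ofReal_pow (by positivity), one_div,
        ENNReal.ofReal_inv_of_pos hs0, ENNReal.ofReal_natCast]
    have hdiam2 : ∀ v : Fin n → Fin s, EMetric.diam (t n v) ^ ((1:ℝ)/2)
        = (((s:ℕ) : ℝ≥0∞)⁻¹)^n := by
      intro v
      rw [hdiam n v, hone, ← ENNReal.rpow_natCast (((s:ℕ):ℝ≥0∞)⁻¹) (2*n), ← ENNReal.rpow_mul]
      have : ((2*n:ℕ):ℝ) * ((1:ℝ)/2) = (n:ℝ) := by push_cast; ring
      rw [this, ENNReal.rpow_natCast]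
    rw [Finset.sum_congr rfl (fun v _ => hdiam2 v), Finset.sum_const, nsmul_eq_mul]
    have hcard : (Finset.univ : Finset (Fin n → Fin s)).card = s^n := by
      simp [Fintype.card_fun]
    rw [hcard]
    have hs' : ((s:ℕ) : ℝ≥0∞) ≠ 0 := by
      simp only [ne_eq, Nat.cast_eq_zero]; omega
    rw [Nat.cast_pow, ← mul_pow, ENNReal.mul_inv_cancel hs' (ENNReal.natCast_ne_top s), one_pow]
  have hmu : μH[(1:ℝ)/2] S ≤ 1 := by
    have hr : Filter.Tendsto (fun n : ℕ => ENNReal.ofReal ((1/(s:ℝ)^2)^n)) atTop (nhds 0) := by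
      have h0 : Filter.Tendsto (fun n : ℕ => (1/(s:ℝ)^2)^n) atTop (nhds 0) :=
        tendsto_pow_atTop_nhds_zero_of_lt_one (by positivity) (one_div_lt_one hB)
      have := (ENNReal.continuous_ofReal.tendsto 0).comp h0
      simpa [Function.comp_def] using this
    have hle := MeasureTheory.Measure.hausdorffMeasure_le_liminf_sum ((1:ℝ)/2) S
      (fun n : ℕ => ENNReal.ofReal ((1/(s:ℝ)^2)^n)) hr t
      (Filter.Eventually.of_forall (fun n i => (hdiam n i).le))
      (Filter.Eventually.of_forall hcov)
    refine hle.trans ?_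
    simp only [EMetric.diam] at hsum1
    simp only [hsum1]
    rw [Filter.liminf_const]
  have hne : μH[((1/2 : ℝ≥0) : ℝ)] S ≠ ⊤ := by
    have : ((1/2 : ℝ≥0) : ℝ) = (1:ℝ)/2 := by norm_num
    rw [this]
    exact (hmu.trans_lt ENNReal.one_lt_top).ne
  have := dimH_le_of_hausdorffMeasure_ne_top hne
  refine this.trans_eq ?_
  rw [ENNReal.coe_div (by norm_num), ENNReal.coe_one, ENNReal.coe_ofNat]


lemma lower (s : ℕ) (hs : 2 ≤ s) :
    (1/2 : ℝ≥0∞) ≤ dimH {x : ℝ | ∃ c : ℕ → ℕ, (∀ n, c n ≤ s - 1) ∧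
      x = ∑' n : ℕ, (c n : ℝ) / (s : ℝ) ^ (2 * (n + 1))} := by
  classical
  have hs1 : (1:ℝ) < s := by exact_mod_cast hs.trans_lt' one_lt_two
  have hs0 : (0:ℝ) < s := by linarith
  have hs2 : (2:ℝ) ≤ (s:ℝ) := by exact_mod_cast hs
  have hB : (1:ℝ) < (s:ℝ)^2 := by nlinarith
  have hD : (0:ℝ) ≤ (s:ℝ) - 1 := by linarith
  have hgap : ((s:ℝ)-1)/((s:ℝ)^2-1) ≤ 1/3 := by
    rw [div_le_div_iff₀ (by nlinarith) (by norm_num)]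
    nlinarith [mul_nonneg (by linarith : (0:ℝ) ≤ (s:ℝ)-1) (by linarith : (0:ℝ) ≤ (s:ℝ)-2)]
  set S := {x : ℝ | ∃ c : ℕ → ℕ, (∀ n, c n ≤ s - 1) ∧
      x = ∑' n : ℕ, (c n : ℝ) / (s : ℝ) ^ (2 * (n + 1))} with hSdef
  set g : ℝ → ℝ := fun x =>
    if h : x ∈ S then ∑' n : ℕ, ((h.choose n : ℕ) : ℝ)/(s:ℝ)^(n+1) else 0 with hg
  -- basic facts about a member's chosen digits
  have hval : ∀ {x : ℝ} (h : x ∈ S),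
      (∀ n, h.choose n ≤ s - 1) ∧ x = ∑' n : ℕ, ((h.choose n : ℕ) : ℝ)/(s:ℝ)^(2*(n+1)) :=
    fun {x} h => h.choose_spec
  have hgval : ∀ {x : ℝ} (h : x ∈ S), g x = ∑' n : ℕ, ((h.choose n : ℕ) : ℝ)/(s:ℝ)^(n+1) :=
    fun {x} h => by rw [hg]; exact dif_pos h
  -- uniqueness of digits within S
  have huniq : ∀ {x : ℝ} (c d : ℕ → ℕ), (∀ n, c n ≤ s - 1) → (∀ n, d n ≤ s - 1) →
      x = (∑' n : ℕ, (c n : ℝ)/(s:ℝ)^(2*(n+1))) →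
      x = (∑' n : ℕ, (d n : ℝ)/(s:ℝ)^(2*(n+1))) → c = d := by
    intro x c d hc hd hxc hxd
    by_contra hne
    have hex : ∃ n, c n ≠ d n := Function.ne_iff.1 hne
    set N := Nat.find hex with hN
    have hag : ∀ k, k < N → c k = d k := fun k hk => not_not.1 (Nat.find_min hex hk)
    have hneN : c N ≠ d N := Nat.find_spec hex
    have hsep := sep hB hD hgap (digit_cast hs hc) (digit_cast hs hd) hag hneN
    rw [← series_rw, ← series_rw, ← hxc, ← hxd, sub_self, abs_zero] at hsep
    have : (0:ℝ) < 1/3 * (1/(s:ℝ)^2)^(N+1) := by positivity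
    linarith
  -- Hölder continuity of g on S with exponent 1/2
  have hHolder : HolderOnWith ((4*s : ℕ) : ℝ≥0) (1/2 : ℝ≥0) g S := by
    intro x hx y hy
    obtain ⟨hc1, hc2⟩ := hval hx
    obtain ⟨hd1, hd2⟩ := hval hy
    by_cases hcd : hx.choose = hy.choose
    · have hxy : g x = g y := by
        rw [hgval hx, hgval hy, hcd]
      rw [hxy, edist_self]
      exact zero_le
    · have hex : ∃ n, hx.choose n ≠ hy.choose n := Function.ne_iff.1 hcd
      set N := Nat.find hex with hN
      have hag : ∀ k, k < N → hx.choose k = hy.choose k :=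
        fun k hk => not_not.1 (Nat.find_min hex hk)
      have hneN : hx.choose N ≠ hy.choose N := Nat.find_spec hex
      -- separation in x
      have hsep := sep hB hD hgap (digit_cast hs hc1) (digit_cast hs hd1) hag hneN
      rw [← series_rw, ← series_rw, ← hc2, ← hd2] at hsep
      -- difference of g values
      have hdiff := diff_le hs1 hD (digit_cast hs hc1) (digit_cast hs hd1) hag
      rw [← hgval hx, ← hgval hy, div_self (by linarith : (s:ℝ) - 1 ≠ 0), one_mul] at hdiff
      -- real inequality
      have hkey : |g x - g y| ≤ (4*(s:ℝ)) * Real.sqrt |x - y| := by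
        have hq1 : ((1/(s:ℝ))^N)^2 = ((s:ℝ)^2) * (1/(s:ℝ)^2)^(N+1) := by
          rw [show ((1/(s:ℝ))^N)^2 = ((1/(s:ℝ))^2)^N by rw [← pow_mul, ← pow_mul, Nat.mul_comm],
            show ((1:ℝ)/(s:ℝ))^2 = 1/(s:ℝ)^2 by rw [div_pow, one_pow], pow_succ]
          field_simp
          ring_nf
          rw [← mul_pow, mul_inv_cancel₀ hs0.ne', one_pow, one_mul]
        have hsq : |g x - g y|^2 ≤ (4*(s:ℝ))^2 * |x - y| := by
          have h1 : |g x - g y|^2 ≤ ((1/(s:ℝ))^N)^2 :=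
            pow_le_pow_left₀ (abs_nonneg _) hdiff 2
          have h2 : (1/(s:ℝ)^2)^(N+1) ≤ 3 * |x - y| := by linarith
          have h3 : (0:ℝ) < (s:ℝ)^2 := by positivity
          nlinarith
        have h4 := Real.sqrt_le_sqrt hsq
        rw [Real.sqrt_sq_eq_abs, abs_abs, Real.sqrt_mul (sq_nonneg _),
          Real.sqrt_sq (by positivity)] at h4
        exact h4
      -- convert to edist
      rw [edist_dist, edist_dist, Real.dist_eq, Real.dist_eq]
      calc ENNReal.ofReal |g x - g y|
          ≤ ENNReal.ofReal ((4*(s:ℝ)) * Real.sqrt |x - y|) := ENNReal.ofReal_le_ofReal hkey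
        _ = ENNReal.ofReal (4*(s:ℝ)) * ENNReal.ofReal (Real.sqrt |x - y|) :=
            ENNReal.ofReal_mul (by positivity)
        _ = (((4*s : ℕ) : ℝ≥0) : ℝ≥0∞) * ENNReal.ofReal |x - y| ^ (((1/2 : ℝ≥0) : ℝ)) := by
            rw [show (((1/2 : ℝ≥0) : ℝ)) = (1/2 : ℝ) from by norm_num,
              Real.sqrt_eq_rpow, ENNReal.ofReal_rpow_of_nonneg (abs_nonneg _) (by norm_num),
              show (4*(s:ℝ)) = ((4*s : ℕ) : ℝ) by push_cast; ring, ENNReal.ofReal_natCast,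
              ENNReal.coe_natCast]
  -- the image of S under g contains [0,1)
  have himg : Set.Ico (0:ℝ) 1 ⊆ g '' S := by
    intro y hy
    obtain ⟨c, hcb, hcy⟩ := exists_expansion s hs hy
    refine ⟨∑' n : ℕ, (c n : ℝ)/(s:ℝ)^(2*(n+1)), ⟨c, hcb, rfl⟩, ?_⟩
    have hxS : (∑' n : ℕ, (c n : ℝ)/(s:ℝ)^(2*(n+1))) ∈ S := ⟨c, hcb, rfl⟩
    rw [hgval hxS]
    have := huniq hxS.choose c (hval hxS).1 hcb (hval hxS).2 rfl
    rw [this, ← hcy]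
  -- conclude
  have hIco : dimH (Set.Ico (0:ℝ) 1) = 1 := by
    rw [Real.dimH_of_nonempty_interior (E := ℝ)
      (by rw [interior_Ico]; exact ⟨1/2, by norm_num⟩)]
    simp [Module.finrank_self]
  have h1 : (1:ℝ≥0∞) ≤ dimH (g '' S) := by
    rw [← hIco]
    exact dimH_mono himg
  have h2 : dimH (g '' S) ≤ dimH S / ((1/2 : ℝ≥0) : ℝ≥0∞) :=
    hHolder.dimH_image_le (by norm_num)
  have h3 : (1:ℝ≥0∞) ≤ dimH S / ((1/2 : ℝ≥0) : ℝ≥0∞) := h1.trans h2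
  have h4 : ((1/2 : ℝ≥0) : ℝ≥0∞) ≤ dimH S := by
    calc ((1/2 : ℝ≥0) : ℝ≥0∞) = ((1/2 : ℝ≥0) : ℝ≥0∞) * 1 := (mul_one _).symm
      _ ≤ ((1/2 : ℝ≥0) : ℝ≥0∞) * (dimH S / ((1/2 : ℝ≥0) : ℝ≥0∞)) :=
          mul_le_mul_right h3 _
      _ ≤ dimH S := ENNReal.mul_div_le
  refine le_trans (le_of_eq ?_) h4
  rw [ENNReal.coe_div (by norm_num), ENNReal.coe_one, ENNReal.coe_ofNat]

end Stmt6Aux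


/-- Paper's Lemma 9: the set of invariant points of the function `f₊`, i.e. the
set of numbers in `[0,1]` whose s-adic expansion has digit `0` at every odd
position, has Hausdorff dimension `1/2`. -/
theorem stmt_6 (s : ℕ) (hs : 2 ≤ s) :
    dimH {x : ℝ | ∃ c : ℕ → ℕ, (∀ n, c n ≤ s - 1) ∧
      x = ∑' n : ℕ, (c n : ℝ) / (s : ℝ) ^ (2 * (n + 1))} = 1 / 2 := by
  exact le_antisymm (Stmt6Aux.upper s hs) (Stmt6Aux.lower s hs)
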